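/- For every DFA with n states that admits a mortal word, the shortest mortal word has length at most n(n+1)/2. -/

import Mathlib

/-- Running a DFA with partial transition function `δ` on a word from state `q`;
`none` means undefined. -/
def dfaRun {Q σ : Type*} (δ : Q → σ → Option Q) : Q → List σ → Option Q
  | q, [] => some q
  | q, a :: w =>
    match δ q a with
    | none => none
    | some q2 => dfaRun δ q2 w

theorem dfaRun_append {Q σ : Type*} (δ : Q → σ → Option Q) (q : Q) (u v : List σ) :
    dfaRun δ q (u ++ v) = (dfaRun δ q u).bind (fun r => dfaRun δ r v) := by
  induction u generalizing q with
  | nil => simp [dfaRun]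
  | cons a u ih =>
    simp only [List.cons_append, dfaRun]
    cases δ q a with
    | none => rfl
    | some q2 => exact ih q2

/-- If a global mortal word exists, then any nonempty set `A` contains a state
that can be killed by a word of length at most `n - |A| + 1`. -/
theorem kill_one {Q σ : Type*} [Fintype Q] [DecidableEq Q] (δ : Q → σ → Option Q)
    (A : Finset Q) (hA : A.Nonempty)
    (hm : ∀ q, ∃ w : List σ, dfaRun δ q w = none) :
    ∃ u : List σ, (∃ q ∈ A, dfaRun δ q u = none) ∧
      u.length ≤ Fintype.card Q - A.card + 1 := by
  classical
  obtain ⟨q1, hq1⟩ := hA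
  obtain ⟨w1, hw1⟩ := hm q1
  have hex : ∃ l, ∃ q ∈ A, ∃ u : List σ, u.length = l ∧ dfaRun δ q u = none :=
    ⟨w1.length, q1, hq1, w1, rfl, hw1⟩
  obtain ⟨q0, hq0, u, hulen, hu⟩ := Nat.find_spec hex
  have hmin : ∀ m, m < Nat.find hex →
      ¬ ∃ q ∈ A, ∃ v : List σ, v.length = m ∧ dfaRun δ q v = none :=
    fun m hm' => Nat.find_min hex hm'
  -- all proper prefixes of `u` are alive from `q0`
  have halive : ∀ i, i < u.length → ∃ s, dfaRun δ q0 (u.take i) = some s := by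
    intro i hi
    cases h' : dfaRun δ q0 (u.take i) with
    | some s => exact ⟨s, rfl⟩
    | none =>
      exfalso
      exact hmin i (by omega)
        ⟨q0, hq0, u.take i, by simp [List.length_take]; omega, h'⟩
  set r : ℕ → Q := fun i => (dfaRun δ q0 (u.take i)).getD q0 with hrdef
  have hr : ∀ i, i < u.length → dfaRun δ q0 (u.take i) = some (r i) := by
    intro i hi
    obtain ⟨s, hs⟩ := halive i hi
    simp [hrdef, hs]
  have hsuffix : ∀ i, i < u.length → dfaRun δ (r i) (List.drop i u) = none := by
    intro i hi
    have h1 : dfaRun δ q0 (u.take i ++ u.drop i) = none := by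
      rw [List.take_append_drop]; exact hu
    rw [dfaRun_append, hr i hi] at h1
    simpa using h1
  have hnotA : ∀ i, 1 ≤ i → i < u.length → r i ∉ A := by
    intro i h1 h2 hin
    exact hmin (u.length - i) (by omega)
      ⟨r i, hin, u.drop i, by simp, hsuffix i h2⟩
  have hinj : ∀ i j, i < j → j < u.length → r i ≠ r j := by
    intro i j hij hj heq
    have hv : dfaRun δ q0 (u.take i ++ u.drop j) = none := by
      rw [dfaRun_append, hr i (by omega)]
      simpa [heq] using hsuffix j hj
    exact hmin (u.take i ++ u.drop j).length
      (by rw [← hulen]; simp [List.length_take, List.length_drop]; omega)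
      ⟨q0, hq0, u.take i ++ u.drop j, rfl, hv⟩
  -- counting
  have hcount : u.length - 1 ≤ (Aᶜ : Finset Q).card := by
    have := Finset.card_le_card_of_injOn r
      (s := Finset.Ico 1 u.length) (t := Aᶜ)
      (fun i hi => by
        simp only [Finset.coe_Ico, Set.mem_Ico, Finset.mem_coe, Finset.mem_Ico] at hi
        simpa using hnotA i hi.1 hi.2)
      (by
        intro i hi j hj hrij
        simp only [Finset.coe_Ico, Set.mem_Ico] at hi hj
        rcases lt_trichotomy i j with h | h | h
        · exact absurd hrij (hinj i j h hj.2)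
        · exact h
        · exact absurd hrij.symm (hinj j i h hi.2))
    simpa [Nat.card_Ico] using this
  rw [Finset.card_compl] at hcount
  exact ⟨u, ⟨q0, hq0, hu⟩, by omega⟩

theorem kill_all {Q σ : Type*} [Fintype Q] [DecidableEq Q] (δ : Q → σ → Option Q)
    (hm : ∀ q, ∃ w : List σ, dfaRun δ q w = none) :
    ∀ k (A : Finset Q), A.card = k →
      ∃ w : List σ, (∀ q ∈ A, dfaRun δ q w = none) ∧
        w.length ≤ ∑ i ∈ Finset.range k, (Fintype.card Q - i) := by
  intro k
  induction k using Nat.strong_induction_on with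
  | _ k ih =>
    intro A hA
    rcases Finset.eq_empty_or_nonempty A with rfl | hne
    · exact ⟨[], by simp, by simp⟩
    · have hk1 : 1 ≤ k := by
        rw [← hA]; exact Finset.card_pos.mpr hne
      obtain ⟨u, ⟨q0, hq0, hq0u⟩, hulen⟩ := kill_one δ A hne hm
      set A' := (A.erase q0).biUnion (fun q => (dfaRun δ q u).toFinset) with hA'
      have hcard' : A'.card ≤ k - 1 := by
        calc A'.card ≤ ∑ q ∈ A.erase q0, ((dfaRun δ q u).toFinset).card :=
              Finset.card_biUnion_le
          _ ≤ ∑ _q ∈ A.erase q0, 1 := by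
              refine Finset.sum_le_sum (fun q _ => ?_)
              cases dfaRun δ q u <;> simp
          _ = (A.erase q0).card := by simp
          _ = k - 1 := by rw [Finset.card_erase_of_mem hq0, hA]
      obtain ⟨w', hw', hw'len⟩ := ih A'.card (by omega) A' rfl
      refine ⟨u ++ w', ?_, ?_⟩
      · intro q hq
        rw [dfaRun_append]
        cases h' : dfaRun δ q u with
        | none => rfl
        | some s =>
          have hsA' : s ∈ A' := by
            have hqne : q ≠ q0 := by
              intro hqq; rw [hqq, hq0u] at h'; exact absurd h' (by simp)
            exact Finset.mem_biUnion.mpr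
              ⟨q, Finset.mem_erase.mpr ⟨hqne, hq⟩, by simp [h']⟩
          simpa using hw' s hsA'
      · have hkn : k ≤ Fintype.card Q := by
          rw [← hA]; exact Finset.card_le_univ A
        have hsum : ∑ i ∈ Finset.range k, (Fintype.card Q - i)
            = (∑ i ∈ Finset.range (k - 1), (Fintype.card Q - i))
              + (Fintype.card Q - (k - 1)) := by
          conv_lhs => rw [show k = (k - 1) + 1 by omega, Finset.sum_range_succ]
        have hmono : (∑ i ∈ Finset.range A'.card, (Fintype.card Q - i))
            ≤ ∑ i ∈ Finset.range (k - 1), (Fintype.card Q - i) :=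
          Finset.sum_le_sum_of_subset (Finset.range_subset_range.mpr hcard')
        simp only [List.length_append]
        omega

theorem sum_gauss (n : ℕ) : ∑ i ∈ Finset.range n, (n - i) = n * (n + 1) / 2 := by
  have h1 : ∑ i ∈ Finset.range n, (n - i) = ∑ i ∈ Finset.range n, (i + 1) := by
    rw [← Finset.sum_range_reflect]
    exact Finset.sum_congr rfl (fun j hj => by
      have := Finset.mem_range.mp hj; omega)
  have h2 : ∑ i ∈ Finset.range (n + 1), i = ∑ i ∈ Finset.range n, (i + 1) + 0 :=
    Finset.sum_range_succ' (fun i => i) n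
  have h3 : (∑ i ∈ Finset.range (n + 1), i) * 2 = (n + 1) * n := by
    simpa using Finset.sum_range_id_mul_two (n + 1)
  have h4 : n * (n + 1) = (n + 1) * n := Nat.mul_comm _ _
  omega

/-- For every DFA with `n` states that admits a mortal word, there is a mortal
word of length at most `n (n + 1) / 2`. -/
theorem stmt15 {Q σ : Type*} [Fintype Q] (n : ℕ) (hn : Fintype.card Q = n)
    (δ : Q → σ → Option Q) (h : ∃ w : List σ, ∀ q, dfaRun δ q w = none) :
    ∃ w : List σ, (∀ q, dfaRun δ q w = none) ∧ w.length ≤ n * (n + 1) / 2 := by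
  classical
  obtain ⟨w0, hw0⟩ := h
  have hm : ∀ q, ∃ w : List σ, dfaRun δ q w = none := fun q => ⟨w0, hw0 q⟩
  obtain ⟨w, hw, hlen⟩ := kill_all δ hm (Fintype.card Q) Finset.univ
    (by simp)
  refine ⟨w, fun q => hw q (Finset.mem_univ q), ?_⟩
  calc w.length ≤ ∑ i ∈ Finset.range (Fintype.card Q), (Fintype.card Q - i) := hlen
    _ = Fintype.card Q * (Fintype.card Q + 1) / 2 := sum_gauss _
    _ = n * (n + 1) / 2 := by rw [hn]
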